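/- Let 0 ≤ d_2 ≤ d_1 < 1/2, p ∈ [0,1/2), ε ∈ [0,1), and set κ† := max{(1−H_b(d_1))/(1−H_b(p)), (1−H_b(d_2))/(1−ε)}. If κ† ≥ 1, then for every α ∈ [0,1/2]: 1 − H_b(α*d_1) ≤ κ†·(1 − H_b(α*p)) and H_b(α*d_2) − H_b(d_2) ≤ κ†·(1−ε)·H_b(α). -/

import Mathlib

noncomputable section

/-- Binary entropy function (base 2). -/
def Hb (x : ℝ) : ℝ := -(x * Real.logb 2 x) - (1 - x) * Real.logb 2 (1 - x)

/-- Binary convolution `a*b = a(1-b)+(1-a)b`. -/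
def bconv (a b : ℝ) : ℝ := a * (1 - b) + (1 - a) * b

open Real Filter

namespace SepAux

lemma log2_pos : (0:ℝ) < Real.log 2 := Real.log_pos (by norm_num)

lemma Hb_eq (x : ℝ) :
    Hb x = (-(x * Real.log x) - (1 - x) * Real.log (1 - x)) / Real.log 2 := by
  unfold Hb Real.logb
  field_simp

/-- The power series of `2 log 2 · (1 - H_b((1-u)/2))`. -/
def S (u : ℝ) : ℝ := ∑' k : ℕ, u ^ (2*k+2) / (((k:ℝ)+1) * (2*(k:ℝ)+1))

lemma coeff_pos (k : ℕ) : (0:ℝ) < ((k:ℝ)+1) * (2*(k:ℝ)+1) := by positivity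

lemma summable_base : Summable (fun k : ℕ => 1 / ((k:ℝ)+1)^2) := by
  have := (summable_nat_add_iff (f := fun n : ℕ => 1 / (n:ℝ)^2) 1).mpr
    (Real.summable_one_div_nat_pow.mpr one_lt_two)
  simp only [Nat.cast_add, Nat.cast_one] at this
  exact this

lemma summable_S {u : ℝ} (h0 : 0 ≤ u) (h1 : u ≤ 1) :
    Summable (fun k : ℕ => u ^ (2*k+2) / (((k:ℝ)+1) * (2*(k:ℝ)+1))) := by
  refine Summable.of_nonneg_of_le (fun k => by positivity) (fun k => ?_) summable_base
  have hpow : u ^ (2*k+2) ≤ 1 := pow_le_one₀ h0 h1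
  have h2 : ((k:ℝ)+1)^2 ≤ ((k:ℝ)+1) * (2*(k:ℝ)+1) := by
    nlinarith [Nat.cast_nonneg (α := ℝ) k]
  exact div_le_div₀ zero_le_one hpow (by positivity) h2

lemma S_nonneg {u : ℝ} (h0 : 0 ≤ u) : 0 ≤ S u :=
  tsum_nonneg fun k => by positivity

lemma S_le_S {u w : ℝ} (h0 : 0 ≤ u) (huw : u ≤ w) (hw : w ≤ 1) : S u ≤ S w := by
  refine Summable.tsum_le_tsum (fun k => ?_) (summable_S h0 (huw.trans hw)) (summable_S (h0.trans huw) hw)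
  exact (div_le_div_iff_of_pos_right (coeff_pos k)).mpr (pow_le_pow_left₀ h0 huw _)

lemma sq_le_S {u : ℝ} (h0 : 0 ≤ u) (h1 : u ≤ 1) : u^2 ≤ S u := by
  have h := Summable.le_tsum (summable_S h0 h1) 0 (fun j _ => by positivity)
  simpa [S] using h

lemma hasSum_S {u : ℝ} (h : |u| < 1) :
    HasSum (fun k : ℕ => u ^ (2*k+2) / (((k:ℝ)+1) * (2*(k:ℝ)+1)))
      ((1-u) * Real.log (1-u) + (1+u) * Real.log (1+u)) := by
  obtain ⟨hl, hr⟩ := abs_lt.mp h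
  have hu1 : (0:ℝ) < 1 - u := by linarith
  have hu2 : (0:ℝ) < 1 + u := by linarith
  have h2 : |u^2| < 1 := by
    rw [abs_pow]
    nlinarith [abs_nonneg u]
  have A := hasSum_pow_div_log_of_abs_lt_one h2
  have B := (hasSum_log_sub_log_of_abs_lt_one h).mul_left u
  have C := B.sub A
  have hterm : (fun k : ℕ => u * (2 * (1/(2*(k:ℝ)+1)) * u^(2*k+1)) - (u^2)^(k+1)/((k:ℝ)+1))
      = fun k : ℕ => u ^ (2*k+2) / (((k:ℝ)+1) * (2*(k:ℝ)+1)) := by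
    funext k
    have hc1 : (2*(k:ℝ)+1) ≠ 0 := by positivity
    have hc2 : ((k:ℝ)+1) ≠ 0 := by positivity
    field_simp
    ring
  have hval : u * (Real.log (1+u) - Real.log (1-u)) - (-Real.log (1 - u^2))
      = (1-u) * Real.log (1-u) + (1+u) * Real.log (1+u) := by
    have e : (1:ℝ) - u^2 = (1-u)*(1+u) := by ring
    rw [e, Real.log_mul hu1.ne' hu2.ne']
    ring
  rw [hterm, hval] at C
  exact C

lemma one_sub_Hb {x : ℝ} (hx0 : 0 < x) (hx : x ≤ 1/2) :
    1 - Hb x = S (1 - 2*x) / (2 * Real.log 2) := by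
  have hl2 : Real.log 2 ≠ 0 := log2_pos.ne'
  have h0 : (0:ℝ) ≤ 1 - 2*x := by linarith
  have h1 : (1:ℝ) - 2*x < 1 := by linarith
  have hS : S (1-2*x) = (1-(1-2*x)) * Real.log (1-(1-2*x)) + (1+(1-2*x)) * Real.log (1+(1-2*x)) :=
    (hasSum_S (by rw [abs_of_nonneg h0]; exact h1)).tsum_eq
  have e1 : (1:ℝ) - (1-2*x) = 2*x := by ring
  have e2 : (1:ℝ) + (1-2*x) = 2*(1-x) := by ring
  rw [hS, e1, e2, Real.log_mul two_ne_zero hx0.ne',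
    Real.log_mul two_ne_zero (by linarith : (1:ℝ)-x ≠ 0), Hb_eq]
  field_simp
  ring

lemma Hb_zero : Hb 0 = 0 := by simp [Hb]

lemma Hb_nonneg {x : ℝ} (h0 : 0 ≤ x) (h1 : x ≤ 1) : 0 ≤ Hb x := by
  rw [Hb_eq]
  have l1 : 0 ≤ -(x * Real.log x) := by
    have := mul_nonneg h0 (neg_nonneg.2 (Real.log_nonpos h0 h1))
    rw [mul_neg] at this; exact this
  have l2 : 0 ≤ -((1-x) * Real.log (1-x)) := by
    have hl : Real.log (1-x) ≤ 0 := Real.log_nonpos (by linarith) (by linarith)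
    have := mul_nonneg (by linarith : (0:ℝ) ≤ 1-x) (neg_nonneg.2 hl)
    rw [mul_neg] at this; exact this
  apply div_nonneg _ log2_pos.le
  linarith

lemma one_sub_Hb_nonneg {x : ℝ} (h0 : 0 ≤ x) (h : x ≤ 1/2) : 0 ≤ 1 - Hb x := by
  rcases h0.eq_or_lt with h' | h'
  · rw [← h', Hb_zero]; norm_num
  · rw [one_sub_Hb h' h]
    exact div_nonneg (S_nonneg (by linarith)) (by positivity)

lemma one_sub_Hb_pos {x : ℝ} (h0 : 0 ≤ x) (h : x < 1/2) : 0 < 1 - Hb x := by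
  rcases h0.eq_or_lt with h' | h'
  · rw [← h', Hb_zero]; norm_num
  · rw [one_sub_Hb h' h.le]
    apply div_pos _ (by positivity)
    have h1 := sq_le_S (u := 1-2*x) (by linarith) (by linarith)
    nlinarith [pow_pos (by linarith : (0:ℝ) < 1-2*x) 2]

lemma Hb_mono {x y : ℝ} (h0 : 0 ≤ x) (hxy : x ≤ y) (hy : y ≤ 1/2) : Hb x ≤ Hb y := by
  rcases h0.eq_or_lt with h' | h'
  · rw [← h', Hb_zero]
    exact Hb_nonneg (by linarith) (by linarith)
  · have e1 := one_sub_Hb h' (hxy.trans hy)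
    have e2 := one_sub_Hb (h'.trans_le hxy) hy
    have hS : S (1-2*y) ≤ S (1-2*x) := S_le_S (by linarith) (by linarith) (by linarith)
    have := (div_le_div_iff_of_pos_right (by positivity : (0:ℝ) < 2 * Real.log 2)).mpr hS
    linarith

lemma Hb_continuous : Continuous Hb := by
  have h : Hb = fun x => (-(x * Real.log x) - (1-x) * Real.log (1-x)) / Real.log 2 :=
    funext Hb_eq
  rw [h]
  apply Continuous.div_const
  apply Continuous.sub
  · exact Real.continuous_mul_log.neg
  · exact Real.continuous_mul_log.comp (continuous_const.sub continuous_id)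

lemma pow_term_nonneg {a b v : ℝ} (hb0 : 0 ≤ b) (hba : b ≤ a) (hv0 : 0 ≤ v) (hv1 : v ≤ 1)
    {J K : ℕ} (hJK : J ≤ K) :
    0 ≤ (v^K - v^J) * (a^J * b^K - a^K * b^J) := by
  have ha0 : 0 ≤ a := hb0.trans hba
  have h1 : v^K ≤ v^J := pow_le_pow_of_le_one hv0 hv1 hJK
  obtain ⟨m, rfl⟩ := Nat.exists_eq_add_of_le hJK
  have h2 : a^J * b^(J+m) ≤ a^(J+m) * b^J := by
    have hbm : b^m ≤ a^m := pow_le_pow_left₀ hb0 hba m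
    have h3 : (0:ℝ) ≤ a^J * b^J := by positivity
    calc a^J * b^(J+m) = (a^J*b^J) * b^m := by rw [pow_add]; ring
    _ ≤ (a^J*b^J) * a^m := mul_le_mul_of_nonneg_left hbm h3
    _ = a^(J+m) * b^J := by rw [pow_add]; ring
  nlinarith [mul_nonneg (sub_nonneg.2 h1) (sub_nonneg.2 h2)]

lemma E_nonneg {a b v : ℝ} (hb0 : 0 ≤ b) (hba : b ≤ a) (hv0 : 0 ≤ v) (hv1 : v ≤ 1) (j k : ℕ) :
    0 ≤ (v^(2*k+2) - v^(2*j+2)) * (a^(2*j+2) * b^(2*k+2) - a^(2*k+2) * b^(2*j+2)) := by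
  rcases le_total j k with h | h
  · exact pow_term_nonneg hb0 hba hv0 hv1 (by omega)
  · have := pow_term_nonneg hb0 hba hv0 hv1 (J := 2*k+2) (K := 2*j+2) (by omega)
    nlinarith [this]

lemma S_mul_le {a b v : ℝ} (hb0 : 0 ≤ b) (hba : b ≤ a) (ha1 : a ≤ 1)
    (hv0 : 0 ≤ v) (hv1 : v ≤ 1) : S (v*a) * S b ≤ S a * S (v*b) := by
  have ha0 : 0 ≤ a := hb0.trans hba
  have hb1 : b ≤ 1 := hba.trans ha1
  have hva0 : 0 ≤ v*a := mul_nonneg hv0 ha0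
  have hva1 : v*a ≤ 1 := mul_le_one₀ hv1 ha0 ha1
  have hvb0 : 0 ≤ v*b := mul_nonneg hv0 hb0
  have hvb1 : v*b ≤ 1 := mul_le_one₀ hv1 hb0 hb1
  set t : ℝ → ℕ → ℝ := fun u k => u ^ (2*k+2) / (((k:ℝ)+1) * (2*(k:ℝ)+1)) with ht
  have hnorm : ∀ u : ℝ, 0 ≤ u → u ≤ 1 → Summable (fun k : ℕ => ‖t u k‖) := by
    intro u h0 h1
    have he : (fun k : ℕ => ‖t u k‖) = fun k : ℕ => u ^ (2*k+2) / (((k:ℝ)+1) * (2*(k:ℝ)+1)) := by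
      funext k
      rw [ht]
      simp only []
      rw [Real.norm_eq_abs, abs_of_nonneg (by positivity)]
    rw [he]
    exact summable_S h0 h1
  have hS1 : Summable (fun z : ℕ×ℕ => t (v*a) z.1 * t b z.2) :=
    summable_mul_of_summable_norm (hnorm _ hva0 hva1) (hnorm _ hb0 hb1)
  have hS2 : Summable (fun z : ℕ×ℕ => t a z.1 * t (v*b) z.2) :=
    summable_mul_of_summable_norm (hnorm _ ha0 ha1) (hnorm _ hvb0 hvb1)
  have eq1 : S (v*a) * S b = ∑' z : ℕ×ℕ, t (v*a) z.1 * t b z.2 :=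
    tsum_mul_tsum_of_summable_norm (hnorm _ hva0 hva1) (hnorm _ hb0 hb1)
  have eq2 : S a * S (v*b) = ∑' z : ℕ×ℕ, t a z.1 * t (v*b) z.2 :=
    tsum_mul_tsum_of_summable_norm (hnorm _ ha0 ha1) (hnorm _ hvb0 hvb1)
  rw [eq1, eq2]
  set D : ℕ×ℕ → ℝ := fun z => t a z.1 * t (v*b) z.2 - t (v*a) z.1 * t b z.2 with hD
  have hDsum : Summable D := hS2.sub hS1
  have hDswap : Summable (fun z : ℕ×ℕ => D (z.2, z.1)) := by
    have := (Equiv.prodComm ℕ ℕ).summable_iff.mpr hDsum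
    exact this
  have hkey : ∀ z : ℕ×ℕ, 0 ≤ D z + D (z.2, z.1) := by
    rintro ⟨j, k⟩
    show 0 ≤ D (j, k) + D (k, j)
    have hc1 := coeff_pos j
    have hc2 := coeff_pos k
    have heq : D (j, k) + D (k, j)
        = (v^(2*k+2) - v^(2*j+2)) * (a^(2*j+2) * b^(2*k+2) - a^(2*k+2) * b^(2*j+2))
          / ((((j:ℝ)+1) * (2*(j:ℝ)+1)) * (((k:ℝ)+1) * (2*(k:ℝ)+1))) := by
      rw [hD, ht]
      simp only []
      rw [mul_pow, mul_pow]
      field_simp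
      ring
    rw [heq]
    exact div_nonneg (E_nonneg hb0 hba hv0 hv1 j k) (by positivity)
  have h2 : ∑' z : ℕ×ℕ, D (z.2, z.1) = ∑' z : ℕ×ℕ, D z := by
    have := (Equiv.prodComm ℕ ℕ).tsum_eq D
    exact this
  have h3 : 0 ≤ ∑' z : ℕ×ℕ, (D z + D (z.2, z.1)) := tsum_nonneg hkey
  have h4 : ∑' z : ℕ×ℕ, (D z + D (z.2, z.1))
      = (∑' z : ℕ×ℕ, D z) + ∑' z : ℕ×ℕ, D (z.2, z.1) := Summable.tsum_add hDsum hDswap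
  have h5 : 0 ≤ ∑' z : ℕ×ℕ, D z := by
    rw [h4, h2] at h3
    linarith
  have h6 : ∑' z : ℕ×ℕ, D z
      = (∑' z : ℕ×ℕ, t a z.1 * t (v*b) z.2) - ∑' z : ℕ×ℕ, t (v*a) z.1 * t b z.2 := by
    rw [hD]
    exact Summable.tsum_sub hS2 hS1
  linarith

lemma bconv_mem {α x : ℝ} (hα0 : 0 ≤ α) (hα : α ≤ 1/2) (hx0 : 0 ≤ x) (hx : x ≤ 1/2) :
    0 ≤ bconv α x ∧ bconv α x ≤ 1/2 := by
  unfold bconv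
  constructor <;>
    nlinarith [mul_nonneg hα0 (by linarith : (0:ℝ) ≤ 1 - 2*x),
      mul_nonneg (by linarith : (0:ℝ) ≤ 1-2*α) (by linarith : (0:ℝ) ≤ 1-2*x)]

lemma dagger_pos {d p α : ℝ} (hd0 : 0 < d) (hdp : d ≤ p) (hp : p < 1/2)
    (hα0 : 0 ≤ α) (hα : α ≤ 1/2) :
    (1 - Hb (bconv α d)) * (1 - Hb p) ≤ (1 - Hb d) * (1 - Hb (bconv α p)) := by
  have hp0 : 0 < p := hd0.trans_le hdp
  have hd2 : d < 1/2 := lt_of_le_of_lt hdp hp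
  have hbd0 : 0 < bconv α d := by
    unfold bconv
    nlinarith [mul_nonneg hα0 (by linarith : (0:ℝ) ≤ 1 - 2*d),
      mul_pos (by linarith : (0:ℝ) < 1-α) hd0]
  have hbd2 : bconv α d ≤ 1/2 := (bconv_mem hα0 hα hd0.le hd2.le).2
  have hbp0 : 0 < bconv α p := by
    unfold bconv
    nlinarith [mul_nonneg hα0 (by linarith : (0:ℝ) ≤ 1 - 2*p),
      mul_pos (by linarith : (0:ℝ) < 1-α) hp0]
  have hbp2 : bconv α p ≤ 1/2 := (bconv_mem hα0 hα hp0.le hp.le).2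
  rw [one_sub_Hb hbd0 hbd2, one_sub_Hb hp0 hp.le, one_sub_Hb hd0 hd2.le,
    one_sub_Hb hbp0 hbp2]
  have e1 : 1 - 2 * bconv α d = (1-2*α) * (1-2*d) := by unfold bconv; ring
  have e2 : 1 - 2 * bconv α p = (1-2*α) * (1-2*p) := by unfold bconv; ring
  rw [e1, e2, div_mul_div_comm, div_mul_div_comm]
  have hden : (0:ℝ) < (2 * Real.log 2) * (2 * Real.log 2) := by
    have := log2_pos; nlinarith
  apply (div_le_div_iff_of_pos_right hden).mpr
  exact S_mul_le (by linarith) (by linarith) (by linarith) (by linarith) (by linarith)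

lemma dagger {d p α : ℝ} (hd0 : 0 ≤ d) (hdp : d ≤ p) (hp : p < 1/2)
    (hα0 : 0 ≤ α) (hα : α ≤ 1/2) :
    (1 - Hb (bconv α d)) * (1 - Hb p) ≤ (1 - Hb d) * (1 - Hb (bconv α p)) := by
  rcases hd0.eq_or_lt with h | h
  · subst h
    rcases hdp.eq_or_lt with hq | hq
    · rw [← hq]
      exact le_of_eq (mul_comm _ _)
    · -- p > 0 = d : limit argument
      have hc1 : Continuous fun t : ℝ => bconv α t := by
        unfold bconv; continuity
      have hFc : Continuous fun t : ℝ =>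
          (1 - Hb (bconv α t)) * (1 - Hb p) - (1 - Hb t) * (1 - Hb (bconv α p)) := by
        apply Continuous.sub
        · exact (continuous_const.sub (Hb_continuous.comp hc1)).mul continuous_const
        · exact (continuous_const.sub Hb_continuous).mul continuous_const
      have hten : Tendsto (fun t : ℝ =>
          (1 - Hb (bconv α t)) * (1 - Hb p) - (1 - Hb t) * (1 - Hb (bconv α p)))
          (nhdsWithin 0 (Set.Ioi 0)) (nhds
            ((1 - Hb (bconv α 0)) * (1 - Hb p) - (1 - Hb 0) * (1 - Hb (bconv α p)))) :=
        (hFc.tendsto 0).mono_left nhdsWithin_le_nhds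
      have hev : ∀ᶠ t in nhdsWithin (0:ℝ) (Set.Ioi 0),
          (1 - Hb (bconv α t)) * (1 - Hb p) - (1 - Hb t) * (1 - Hb (bconv α p)) ≤ 0 := by
        filter_upwards [Ioc_mem_nhdsGT_of_mem (Set.mem_Ico.mpr ⟨le_refl (0:ℝ), hq⟩)] with s hs
        have := dagger_pos hs.1 hs.2 hp hα0 hα
        linarith
      have hfin := le_of_tendsto hten hev
      linarith
  · exact dagger_pos h hdp hp hα0 hα

end SepAux

open SepAux

/-- **Inequalities (61)–(62).** If
`κ† = max{(1−H_b(d₁))/(1−H_b(p)), (1−H_b(d₂))/(1−ε)} ≥ 1` (with `d₂ ≤ d₁`), then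
for every `α ∈ [0,1/2]`: `1−H_b(α*d₁) ≤ κ†(1−H_b(α*p))` and
`H_b(α*d₂)−H_b(d₂) ≤ κ†(1−ε)H_b(α)`. -/
theorem separation_bound_inequalities
    (d1 d2 p e : ℝ)
    (hd20 : 0 ≤ d2) (hd21 : d2 ≤ d1) (hd1 : d1 < 1/2)
    (hp0 : 0 ≤ p) (hp : p < 1/2) (he0 : 0 ≤ e) (he : e < 1)
    (hκ : 1 ≤ max ((1 - Hb d1) / (1 - Hb p)) ((1 - Hb d2) / (1 - e))) :
    ∀ α ∈ Set.Icc (0:ℝ) (1/2),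
      1 - Hb (bconv α d1)
        ≤ max ((1 - Hb d1) / (1 - Hb p)) ((1 - Hb d2) / (1 - e))
            * (1 - Hb (bconv α p)) ∧
      Hb (bconv α d2) - Hb d2
        ≤ max ((1 - Hb d1) / (1 - Hb p)) ((1 - Hb d2) / (1 - e))
            * (1 - e) * Hb α := by
  intro α hα
  obtain ⟨hα0, hα2⟩ := hα
  set κ := max ((1 - Hb d1) / (1 - Hb p)) ((1 - Hb d2) / (1 - e)) with hκdef
  have hκA : (1 - Hb d1) / (1 - Hb p) ≤ κ := le_max_left _ _
  have hκB : (1 - Hb d2) / (1 - e) ≤ κ := le_max_right _ _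
  have hd10 : 0 ≤ d1 := hd20.trans hd21
  have hbp := bconv_mem hα0 hα2 hp0 hp.le
  have hbd1 := bconv_mem hα0 hα2 hd10 hd1.le
  have h2 : 0 ≤ 1 - Hb (bconv α p) := one_sub_Hb_nonneg hbp.1 hbp.2
  constructor
  · rcases le_total p d1 with h | h
    · -- p ≤ d1 : use κ ≥ 1
      have hmono : bconv α p ≤ bconv α d1 := by
        unfold bconv
        nlinarith [mul_nonneg (by linarith : (0:ℝ) ≤ 1-2*α) (by linarith : (0:ℝ) ≤ d1 - p)]
      have h1 : Hb (bconv α p) ≤ Hb (bconv α d1) := Hb_mono hbp.1 hmono hbd1.2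
      nlinarith [hκ]
    · -- d1 ≤ p : use κ ≥ (1-Hb d1)/(1-Hb p) and the key inequality
      have hdag := dagger hd10 h hp hα0 hα2
      have hppos : 0 < 1 - Hb p := one_sub_Hb_pos hp0 hp
      have hA : 1 - Hb d1 ≤ κ * (1 - Hb p) := (div_le_iff₀ hppos).mp hκA
      have hfin : (1 - Hb (bconv α d1)) * (1 - Hb p) ≤ (κ * (1 - Hb (bconv α p))) * (1 - Hb p) := by
        nlinarith [mul_le_mul_of_nonneg_right hA h2]
      exact le_of_mul_le_mul_right (by linarith [hfin]) hppos
  · have hB : 1 - Hb d2 ≤ κ * (1 - e) := (div_le_iff₀ (by linarith)).mp hκB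
    have hHα : 0 ≤ Hb α := Hb_nonneg hα0 (by linarith)
    have hdag := dagger (le_refl 0) hd20 (lt_of_le_of_lt hd21 hd1) hα0 hα2
    have hb0 : bconv α 0 = α := by unfold bconv; ring
    rw [hb0, Hb_zero] at hdag
    -- hdag : (1 - Hb α) * (1 - Hb d2) ≤ (1 - 0) * (1 - Hb (bconv α d2))
    nlinarith [mul_le_mul_of_nonneg_left hB hHα]

end
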